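/- Let n ≥ 1 and let Φ : Matrix (Fin n) (Fin n) ℂ → Matrix (Fin n) (Fin n) ℂ be a ℂ-linear map. Then Φ is positive (i.e., Φ(X) is positive semidefinite for every positive semidefinite X) if and only if the Choi matrix J(Φ) is block positive. -/

import Mathlib

open Matrix ComplexOrder

private lemma choi_key_eq (n : ℕ) (Φ : Matrix (Fin n) (Fin n) ℂ →ₗ[ℂ] Matrix (Fin n) (Fin n) ℂ)
    (x y : Fin n → ℂ) :
    star y ⬝ᵥ (Φ (Matrix.of fun k i => (starRingEnd ℂ) (x k) * x i)) *ᵥ y =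
      ∑ k : Fin n, ∑ l : Fin n, ∑ i : Fin n, ∑ j : Fin n,
        (starRingEnd ℂ) (x k * y l) *
          (Φ (Matrix.single k i 1) l j) * x i * y j := by
  have hM : (Matrix.of fun k i => (starRingEnd ℂ) (x k) * x i) =
      ∑ k : Fin n, ∑ i : Fin n, ((starRingEnd ℂ) (x k) * x i) • Matrix.single k i 1 := by
    conv_lhs => rw [matrix_eq_sum_single (Matrix.of fun k i => (starRingEnd ℂ) (x k) * x i)]
    simp [smul_single]
  rw [hM]
  simp only [map_sum, LinearMap.map_smul, dotProduct, mulVec, Finset.sum_apply, Matrix.sum_apply,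
    Matrix.smul_apply, smul_eq_mul, Pi.star_apply, Finset.mul_sum, Finset.sum_mul, RingHom.map_mul]
  have reorder : ∀ f : Fin n → Fin n → Fin n → Fin n → ℂ,
      (∑ l : Fin n, ∑ j : Fin n, ∑ k : Fin n, ∑ i : Fin n, f l j k i) =
        ∑ k : Fin n, ∑ l : Fin n, ∑ i : Fin n, ∑ j : Fin n, f l j k i := by
    intro f
    calc (∑ l : Fin n, ∑ j : Fin n, ∑ k : Fin n, ∑ i : Fin n, f l j k i)
        = ∑ l : Fin n, ∑ k : Fin n, ∑ j : Fin n, ∑ i : Fin n, f l j k i :=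
          Finset.sum_congr rfl fun l _ => Finset.sum_comm
      _ = ∑ k : Fin n, ∑ l : Fin n, ∑ j : Fin n, ∑ i : Fin n, f l j k i := Finset.sum_comm
      _ = ∑ k : Fin n, ∑ l : Fin n, ∑ i : Fin n, ∑ j : Fin n, f l j k i :=
          Finset.sum_congr rfl fun k _ => Finset.sum_congr rfl fun l _ => Finset.sum_comm
  rw [reorder (fun l j k i => star (y l) *
    ((starRingEnd ℂ) (x k) * x i * Φ (Matrix.single k i 1) l j * y j))]
  refine Finset.sum_congr rfl fun k _ => Finset.sum_congr rfl fun l _ =>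
    Finset.sum_congr rfl fun i _ => Finset.sum_congr rfl fun j _ => ?_
  simp only [RingHom.map_mul, Complex.star_def]
  ring

private lemma posSemidef_of_dp (n : ℕ) (M : Matrix (Fin n) (Fin n) ℂ)
    (h : ∀ y : Fin n → ℂ, 0 ≤ star y ⬝ᵥ M *ᵥ y) : M.PosSemidef := by
  refine .of_dotProduct_mulVec_nonneg ?_ h
  rw [Matrix.isHermitian_iff_isSymmetric, LinearMap.isSymmetric_iff_inner_map_self_real]
  intro v
  set w := star ((WithLp.equiv 2 (Fin n → ℂ)) v) ⬝ᵥ M *ᵥ ((WithLp.equiv 2 (Fin n → ℂ)) v) with hw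
  have h1 : (inner ℂ (M.toEuclideanLin v) v : ℂ) = (starRingEnd ℂ) w := by
    rw [hw]
    simp only [toEuclideanLin_apply, EuclideanSpace.inner_eq_star_dotProduct, dotProduct, mulVec,
      Pi.star_apply, map_sum, RingHom.map_mul, Finset.mul_sum, Finset.sum_mul,
      WithLp.equiv_apply, WithLp.equiv_symm_apply, WithLp.ofLp_toLp, RCLike.star_def, Complex.star_def,
      starRingEnd_self_apply]
  have h2 := h ((WithLp.equiv 2 (Fin n → ℂ)) v)
  rw [← hw] at h2
  have him : w.im = 0 := by
    rcases Complex.nonneg_iff.mp h2 with ⟨_, hi⟩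
    exact hi.symm
  have hcw : (starRingEnd ℂ) w = w := by
    apply Complex.ext <;> simp [him]
  rw [h1, Complex.conj_conj, hcw]

/-- A ℂ-linear map `Φ` on `Matrix (Fin n) (Fin n) ℂ` is positive
(maps positive semidefinite matrices to positive semidefinite matrices) if and only if
its Choi matrix `J(Φ)`, with entries `J(Φ)_{(i,k),(j,l)} = (Φ(E_{ij}))_{k,l}`, is block
positive, i.e. `⟨x ⊗ y, J(Φ) (x ⊗ y)⟩` is a nonnegative real number for all `x y : ℂⁿ`.
Here `0 ≤ z` in `ℂ` means `z` is real and nonnegative. -/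
theorem positive_iff_choi_blockPositive (n : ℕ) (hn : 1 ≤ n)
    (Φ : Matrix (Fin n) (Fin n) ℂ →ₗ[ℂ] Matrix (Fin n) (Fin n) ℂ) :
    (∀ X : Matrix (Fin n) (Fin n) ℂ, X.PosSemidef → (Φ X).PosSemidef) ↔
    (∀ x y : Fin n → ℂ,
      0 ≤ ∑ k : Fin n, ∑ l : Fin n, ∑ i : Fin n, ∑ j : Fin n,
        (starRingEnd ℂ) (x k * y l) *
          (Φ (Matrix.single k i 1) l j) * x i * y j) := by
  constructor
  · intro h x y
    rw [← choi_key_eq]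
    have hM : (Matrix.of fun k i => (starRingEnd ℂ) (x k) * x i :
        Matrix (Fin n) (Fin n) ℂ).PosSemidef := by
      refine .of_dotProduct_mulVec_nonneg ?_ fun v => ?_
      · ext k i
        simp [Matrix.conjTranspose_apply, mul_comm]
      · have : star v ⬝ᵥ (Matrix.of fun k i => (starRingEnd ℂ) (x k) * x i) *ᵥ v =
            star (x ⬝ᵥ v) * (x ⬝ᵥ v) := by
          simp only [dotProduct, mulVec, Pi.star_apply, Matrix.of_apply, Finset.mul_sum,
            Finset.sum_mul, Complex.star_def, RingHom.map_mul, map_sum]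
          rw [Finset.sum_comm]
          refine Finset.sum_congr rfl fun a _ => Finset.sum_congr rfl fun b _ => ?_
          ring
        rw [this]
        exact star_mul_self_nonneg _
    exact (h _ hM).dotProduct_mulVec_nonneg y
  · intro h X hX
    obtain ⟨B, hB⟩ : ∃ B : Matrix (Fin n) (Fin n) ℂ, X = Bᴴ * B := by
      open scoped MatrixOrder in exact CStarAlgebra.nonneg_iff_eq_star_mul_self.mp hX.nonneg
    apply posSemidef_of_dp
    intro y
    have hXsum : X = ∑ m : Fin n,
        (Matrix.of fun k i => (starRingEnd ℂ) (B m k) * B m i) := by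
      subst hB
      ext k i
      simp [Matrix.mul_apply, Matrix.conjTranspose_apply, Matrix.sum_apply]
    have dp_sum : ∀ f : Fin n → Matrix (Fin n) (Fin n) ℂ,
        star y ⬝ᵥ (∑ m : Fin n, f m) *ᵥ y = ∑ m : Fin n, star y ⬝ᵥ (f m) *ᵥ y := by
      intro f
      simp only [dotProduct, mulVec, Matrix.sum_apply, Finset.sum_apply, Finset.mul_sum,
        Finset.sum_mul]
      have reorder3 : ∀ g : Fin n → Fin n → Fin n → ℂ,
          (∑ l : Fin n, ∑ j : Fin n, ∑ m : Fin n, g l j m) =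
            ∑ m : Fin n, ∑ l : Fin n, ∑ j : Fin n, g l j m := by
        intro g
        calc (∑ l : Fin n, ∑ j : Fin n, ∑ m : Fin n, g l j m)
            = ∑ l : Fin n, ∑ m : Fin n, ∑ j : Fin n, g l j m :=
              Finset.sum_congr rfl fun _ _ => Finset.sum_comm
          _ = ∑ m : Fin n, ∑ l : Fin n, ∑ j : Fin n, g l j m := Finset.sum_comm
      exact reorder3 (fun l j m => star (y l) * (f m l j * y j))
    rw [hXsum, map_sum, dp_sum]
    refine Finset.sum_nonneg fun m _ => ?_
    rw [choi_key_eq]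
    exact h _ y
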